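/- Let φ : S₁ → S₂ be a surjective homomorphism of countable commutative semigroups. If A ⊆ S₁ is quasi-central, then φ(A) is quasi-central in S₂. -/

import Mathlib

/-- `Thick B`: every finite set has a translate contained in `B`. -/
def Thick {S : Type*} [AddCommSemigroup S] (B : Set S) : Prop :=
  ∀ F : Finset S, ∃ x : S, ∀ f ∈ F, f + x ∈ B

/-- `PiecewiseSyndetic A`: some finite union of translates `-t+A` is thick. -/
def PiecewiseSyndetic {S : Type*} [AddCommSemigroup S] (A : Set S) : Prop :=
  ∃ F : Finset S, Thick {s : S | ∃ t ∈ F, t + s ∈ A}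

/-- `itAdd n t` is the `(n+1)`-fold sum `t + t + ⋯ + t`. -/
def itAdd {S : Type*} [AddCommSemigroup S] : ℕ → S → S
  | 0, t => t
  | n + 1, t => itAdd n t + t

/-- `QuasiCentral A`: there is a decreasing sequence of piecewise syndetic subsets
of `A` such that each member of each set admits a later set inside its translate. -/
def QuasiCentral {S : Type*} [AddCommSemigroup S] (A : Set S) : Prop :=
  ∃ C : ℕ → Set S, (∀ n, C n ⊆ A) ∧ (∀ n, C (n + 1) ⊆ C n) ∧
    (∀ n, PiecewiseSyndetic (C n)) ∧
    ∀ n, ∀ x ∈ C n, ∃ m, C m ⊆ {s : S | x + s ∈ C n}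

theorem stmt_12 {S₁ S₂ : Type*} [AddCommSemigroup S₁] [AddCommSemigroup S₂]
    [Countable S₁] [Countable S₂] (φ : S₁ → S₂)
    (hφ : ∀ a b : S₁, φ (a + b) = φ a + φ b) (hsurj : Function.Surjective φ)
    (A : Set S₁) (hA : QuasiCentral A) : QuasiCentral (φ '' A) := by
  obtain ⟨C, hCA, hCdec, hCps, hCstar⟩ := hA
  refine ⟨fun n => φ '' (C n), fun n => Set.image_mono (hCA n),
    fun n => Set.image_mono (hCdec n), ?_, ?_⟩
  · intro n
    classical
    obtain ⟨F, hF⟩ := hCps n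
    refine ⟨F.image φ, fun G => ?_⟩
    obtain ⟨x, hx⟩ := hF (G.image (Function.surjInv hsurj))
    refine ⟨φ x, fun g hg => ?_⟩
    obtain ⟨t, ht, htmem⟩ := hx (Function.surjInv hsurj g)
      (Finset.mem_image_of_mem _ hg)
    refine ⟨φ t, Finset.mem_image_of_mem φ ht, ⟨t + (Function.surjInv hsurj g + x),
      htmem, ?_⟩⟩
    rw [hφ, hφ, Function.surjInv_eq hsurj]
  · rintro n y ⟨x, hx, rfl⟩
    obtain ⟨m, hm⟩ := hCstar n x hx
    refine ⟨m, ?_⟩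
    rintro s₂ ⟨s, hs, rfl⟩
    exact ⟨x + s, hm hs, hφ x s⟩
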